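/- arXiv:2110.15893 — 2 statements merged into one kernel-verified Lean document; each statement's English description precedes it below -/
import Mathlib

section
/- Let r be a natural number, let l, η : ℝ → ℝ be 1-periodic functions of class C^r, and let a : ℝ → ℝ be a C^r function with a(x+1) = a(x)+1 for all x (a lift of a degree-one circle map). If ‖l‖_{C⁰} · (‖a'‖_{C⁰})^r < 1, where ‖·‖_{C⁰} denotes the supremum norm over ℝ (finite by periodicity), then the cohomological equation φ(x) = l(x)·φ(a(x)) + η(x) has a unique bounded continuous 1-periodic solution φ : ℝ → ℝ, and this solution is of class C^r. -/
set_option linter.unusedSectionVars false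

open Finset in
/-- Solution predicate -/
def CohoSol (l η a φ : ℝ → ℝ) : Prop :=
  Continuous φ ∧ (∃ M : ℝ, ∀ x, |φ x| ≤ M) ∧ Function.Periodic φ 1 ∧
    ∀ x, φ x = l x * φ (a x) + η x

lemma coho_bdd (f : ℝ → ℝ) (hf : Continuous f) (hp : Function.Periodic f 1) :
    BddAbove (Set.range fun x => |f x|) := by
  obtain ⟨C, hC⟩ := (isCompact_Icc (a := (0:ℝ)) (b := 1)).exists_bound_of_continuousOn
    (hf.continuousOn)
  refine ⟨C, ?_⟩
  rintro y ⟨x, rfl⟩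
  obtain ⟨z, hz, hfz⟩ := hp.exists_mem_Ico₀ one_pos x
  simp only []
  rw [hfz, ← Real.norm_eq_abs]
  exact hC z ⟨hz.1, hz.2.le⟩

lemma coho_le_iSup (f : ℝ → ℝ) (hf : Continuous f) (hp : Function.Periodic f 1) (x : ℝ) :
    |f x| ≤ ⨆ y, |f y| :=
  le_ciSup (coho_bdd f hf hp) x

lemma coho_iter_per (a : ℝ → ℝ) (hap : ∀ x, a (x + 1) = a x + 1) :
    ∀ n x, a^[n] (x + 1) = a^[n] x + 1 := by
  intro n
  induction n with
  | zero => simp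
  | succ n ih =>
    intro x
    rw [Function.iterate_succ_apply', Function.iterate_succ_apply', ih, hap]

noncomputable def cohoC (l η a : ℝ → ℝ) (n : ℕ) (x : ℝ) : ℝ :=
  (∏ k ∈ Finset.range n, l (a^[k] x)) * η (a^[n] x)

noncomputable def cohoPhi (l η a : ℝ → ℝ) (x : ℝ) : ℝ := ∑' n, cohoC l η a n x

section C0

variable (l η a : ℝ → ℝ) (hl : Continuous l) (hη : Continuous η) (ha : Continuous a)
  (hlp : Function.Periodic l 1) (hηp : Function.Periodic η 1)
  (hap : ∀ x, a (x + 1) = a x + 1)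

include hl hη ha hlp hηp hap

lemma cohoC_bound (n : ℕ) (x : ℝ) :
    |cohoC l η a n x| ≤ (⨆ y, |η y|) * (⨆ y, |l y|) ^ n := by
  have h1 : ∏ k ∈ Finset.range n, |l (a^[k] x)| ≤ (⨆ y, |l y|) ^ n := by
    calc ∏ k ∈ Finset.range n, |l (a^[k] x)|
        ≤ ∏ _k ∈ Finset.range n, (⨆ y, |l y|) :=
          Finset.prod_le_prod (fun k _ => abs_nonneg _)
            (fun k _ => coho_le_iSup l hl hlp _)
      _ = (⨆ y, |l y|) ^ n := by simp
  have h2 : |η (a^[n] x)| ≤ ⨆ y, |η y| := coho_le_iSup η hη hηp _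
  have h3 : (0:ℝ) ≤ ∏ k ∈ Finset.range n, |l (a^[k] x)| :=
    Finset.prod_nonneg fun k _ => abs_nonneg _
  have h4 : (0:ℝ) ≤ ⨆ y, |η y| := le_trans (abs_nonneg (η 0)) (coho_le_iSup η hη hηp 0)
  rw [cohoC, abs_mul, Finset.abs_prod, mul_comm]
  exact mul_le_mul h2 h1 h3 h4

lemma cohoC_cont (n : ℕ) : Continuous (cohoC l η a n) := by
  have hit : ∀ k : ℕ, Continuous (a^[k]) := fun k => ha.iterate k
  exact (continuous_finset_prod _ fun k _ => hl.comp (hit k)).mul (hη.comp (hit n))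

lemma cohoC_per (n : ℕ) : Function.Periodic (cohoC l η a n) 1 := by
  intro x
  simp only [cohoC, coho_iter_per a hap, hηp _, hlp _]

lemma cohoC_summable_bound (hsm : (⨆ y, |l y|) < 1) :
    Summable (fun n => (⨆ y, |η y|) * (⨆ y, |l y|) ^ n) := by
  have h0 : (0:ℝ) ≤ ⨆ y, |l y| := le_trans (abs_nonneg (l 0)) (coho_le_iSup l hl hlp 0)
  exact (summable_geometric_of_lt_one h0 hsm).mul_left _

lemma cohoC_summable (hsm : (⨆ y, |l y|) < 1) (x : ℝ) :
    Summable (fun n => cohoC l η a n x) :=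
  Summable.of_norm_bounded (cohoC_summable_bound l η a hl hη ha hlp hηp hap hsm)
    (fun n => cohoC_bound l η a hl hη ha hlp hηp hap n x)

lemma cohoC_succ (n : ℕ) (x : ℝ) :
    cohoC l η a (n + 1) x = l x * cohoC l η a n (a x) := by
  simp only [cohoC, Finset.prod_range_succ', Function.iterate_succ_apply,
    Function.iterate_zero_apply]
  ring

lemma cohoPhi_sol (hsm : (⨆ y, |l y|) < 1) : CohoSol l η a (cohoPhi l η a) := by
  have hsum := cohoC_summable l η a hl hη ha hlp hηp hap hsm
  have hub := cohoC_summable_bound l η a hl hη ha hlp hηp hap hsm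
  have hb := cohoC_bound l η a hl hη ha hlp hηp hap
  refine ⟨?_, ⟨∑' n, (⨆ y, |η y|) * (⨆ y, |l y|) ^ n, ?_⟩, ?_, ?_⟩
  · exact continuous_tsum (cohoC_cont l η a hl hη ha hlp hηp hap) hub
      (fun n x => by rw [Real.norm_eq_abs]; exact hb n x)
  · intro x
    have e1 : |cohoPhi l η a x| ≤ ∑' n, |cohoC l η a n x| := by
      simpa [Real.norm_eq_abs, cohoPhi] using norm_tsum_le_tsum_norm (f := fun n => cohoC l η a n x)
        (by simpa [Real.norm_eq_abs] using (hsum x).abs)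
    have e2 : ∑' n, |cohoC l η a n x| ≤ ∑' n, (⨆ y, |η y|) * (⨆ y, |l y|) ^ n :=
      Summable.tsum_le_tsum (fun n => hb n x) (hsum x).abs hub
    exact e1.trans e2
  · intro x
    show (∑' n, cohoC l η a n (x + 1)) = ∑' n, cohoC l η a n x
    exact tsum_congr fun n => cohoC_per l η a hl hη ha hlp hηp hap n x
  · intro x
    have h1 : cohoPhi l η a x = cohoC l η a 0 x + ∑' n, cohoC l η a (n + 1) x :=
      Summable.tsum_eq_zero_add (hsum x)
    have h2 : ∀ n, cohoC l η a (n + 1) x = l x * cohoC l η a n (a x) :=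
      fun n => cohoC_succ l η a hl hη ha hlp hηp hap n x
    have h3 : ∑' n, cohoC l η a (n + 1) x = l x * cohoPhi l η a (a x) := by
      rw [tsum_congr h2, tsum_mul_left]; rfl
    have h4 : cohoC l η a 0 x = η x := by
      simp [cohoC]
    rw [h1, h3, h4]
    ring

lemma coho_uniq (hsm : (⨆ y, |l y|) < 1) (φ₁ φ₂ : ℝ → ℝ)
    (h1 : CohoSol l η a φ₁) (h2 : CohoSol l η a φ₂) : φ₁ = φ₂ := by
  obtain ⟨-, ⟨M₁, hM₁⟩, -, he₁⟩ := h1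
  obtain ⟨-, ⟨M₂, hM₂⟩, -, he₂⟩ := h2
  have h0 : (0:ℝ) ≤ ⨆ y, |l y| := le_trans (abs_nonneg (l 0)) (coho_le_iSup l hl hlp 0)
  have key : ∀ n x, |φ₁ x - φ₂ x| ≤ (⨆ y, |l y|) ^ n * (M₁ + M₂) := by
    intro n
    induction n with
    | zero =>
      intro x
      simpa using (abs_sub _ _).trans (add_le_add (hM₁ x) (hM₂ x))
    | succ n ih =>
      intro x
      have : φ₁ x - φ₂ x = l x * (φ₁ (a x) - φ₂ (a x)) := by
        rw [he₁ x, he₂ x]; ring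
      rw [this, abs_mul, pow_succ']
      have := mul_le_mul (coho_le_iSup l hl hlp x) (ih (a x)) (abs_nonneg _) h0
      linarith
  funext x
  have hM0 : (0:ℝ) ≤ M₁ + M₂ := le_trans (abs_nonneg _)
    ((abs_sub _ _).trans (add_le_add (hM₁ x) (hM₂ x)))
  have hlim : Filter.Tendsto (fun n => (⨆ y, |l y|) ^ n * (M₁ + M₂)) Filter.atTop (nhds 0) := by
    simpa using (tendsto_pow_atTop_nhds_zero_of_lt_one h0 hsm).mul_const (M₁ + M₂)
  have : |φ₁ x - φ₂ x| ≤ 0 := ge_of_tendsto hlim (Filter.Eventually.of_forall fun n => key n x)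
  have h2 := abs_nonneg (φ₁ x - φ₂ x)
  have : |φ₁ x - φ₂ x| = 0 := le_antisymm this h2
  have := abs_eq_zero.mp this
  linarith

end C0

lemma coho_per_deriv (f : ℝ → ℝ) (hf : Function.Periodic f 1) :
    Function.Periodic (deriv f) 1 := by
  intro x
  have h1 : deriv (fun y => f (y + 1)) x = deriv f (x + 1) := deriv_comp_add_const f 1 x
  have h2 : (fun y => f (y + 1)) = f := funext hf
  rw [h2] at h1
  exact h1.symm

lemma coho_deriv_lift_per (a : ℝ → ℝ) (hap : ∀ x, a (x + 1) = a x + 1) :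
    Function.Periodic (deriv a) 1 := by
  intro x
  have h1 : deriv (fun y => a (y + 1)) x = deriv a (x + 1) := deriv_comp_add_const a 1 x
  have h2 : (fun y => a (y + 1)) = fun y => a y + 1 := funext hap
  rw [h2, deriv_add_const] at h1
  exact h1.symm

noncomputable def cohoD (a : ℝ → ℝ) (n : ℕ) (x : ℝ) : ℝ :=
  ∏ k ∈ Finset.range n, deriv a (a^[k] x)

noncomputable def cohoC' (l η a : ℝ → ℝ) (n : ℕ) (x : ℝ) : ℝ :=
  (∑ j ∈ Finset.range n, (∏ k ∈ (Finset.range n).erase j, l (a^[k] x)) *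
      (deriv l (a^[j] x) * cohoD a j x)) * η (a^[n] x) +
    (∏ k ∈ Finset.range n, l (a^[k] x)) * (deriv η (a^[n] x) * cohoD a n x)

section C1

variable (l η a : ℝ → ℝ) (hl : ContDiff ℝ 1 l) (hη : ContDiff ℝ 1 η) (ha : ContDiff ℝ 1 a)
  (hlp : Function.Periodic l 1) (hηp : Function.Periodic η 1)
  (hap : ∀ x, a (x + 1) = a x + 1)

include hl hη ha hlp hηp hap

omit hl hη hlp hηp hap in
lemma coho_iter_hasDeriv (n : ℕ) (x : ℝ) : HasDerivAt (a^[n]) (cohoD a n x) x := by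
  induction n with
  | zero => simpa [cohoD] using hasDerivAt_id x
  | succ n ih =>
    have h1 : HasDerivAt a (deriv a (a^[n] x)) (a^[n] x) :=
      ((ha.differentiable one_ne_zero) (a^[n] x)).hasDerivAt
    have h2 := h1.comp x ih
    rw [← Function.iterate_succ' a n] at h2
    have : deriv a (a^[n] x) * cohoD a n x = cohoD a (n + 1) x := by
      rw [cohoD, cohoD, Finset.prod_range_succ]; ring
    rwa [this] at h2

omit hlp hηp hap in
lemma cohoC_hasDeriv (n : ℕ) (x : ℝ) :
    HasDerivAt (cohoC l η a n) (cohoC' l η a n x) x := by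
  have hA := coho_iter_hasDeriv a ha
  have hprod : HasDerivAt (fun y => ∏ k ∈ Finset.range n, l (a^[k] y))
      (∑ j ∈ Finset.range n, (∏ k ∈ (Finset.range n).erase j, l (a^[k] x)) *
        (deriv l (a^[j] x) * cohoD a j x)) x := by
    have := HasDerivAt.fun_finsetProd (u := Finset.range n) (f := fun k y => l (a^[k] y))
      (f' := fun j => deriv l (a^[j] x) * cohoD a j x) (x := x)
      (fun j _ => ((hl.differentiable one_ne_zero) (a^[j] x)).hasDerivAt.comp x (hA j x))
    simpa [smul_eq_mul] using this
  have hη' : HasDerivAt (fun y => η (a^[n] y)) (deriv η (a^[n] x) * cohoD a n x) x :=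
    ((hη.differentiable one_ne_zero) (a^[n] x)).hasDerivAt.comp x (hA n x)
  exact hprod.mul hη'

end C1

section C1b

variable (l η a : ℝ → ℝ) (hl : ContDiff ℝ 1 l) (hη : ContDiff ℝ 1 η) (ha : ContDiff ℝ 1 a)
  (hlp : Function.Periodic l 1) (hηp : Function.Periodic η 1)
  (hap : ∀ x, a (x + 1) = a x + 1)

include hl hη ha hlp hηp hap

lemma cohoD_bound (n : ℕ) (x : ℝ) : |cohoD a n x| ≤ (⨆ y, |deriv a y|) ^ n := by
  have hcd : Continuous (deriv a) := ha.continuous_deriv le_rfl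
  have hpd : Function.Periodic (deriv a) 1 := coho_deriv_lift_per a hap
  rw [cohoD, Finset.abs_prod]
  calc ∏ k ∈ Finset.range n, |deriv a (a^[k] x)|
      ≤ ∏ _k ∈ Finset.range n, (⨆ y, |deriv a y|) :=
        Finset.prod_le_prod (fun k _ => abs_nonneg _) (fun k _ => coho_le_iSup _ hcd hpd _)
    _ = (⨆ y, |deriv a y|) ^ n := by simp

lemma cohoC'_bound (hS : 1 ≤ ⨆ y, |deriv a y|) (n : ℕ) (x : ℝ) :
    |cohoC' l η a n x| ≤
      ((⨆ y, |deriv l y|) * (⨆ y, |η y|)) *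
        ((n : ℝ) * ((⨆ y, |l y|) * (⨆ y, |deriv a y|)) ^ (n - 1)) +
      (⨆ y, |deriv η y|) * ((⨆ y, |l y|) * (⨆ y, |deriv a y|)) ^ n := by
  set lam := ⨆ y, |l y| with hlam
  set S := ⨆ y, |deriv a y| with hSdef
  set L1 := ⨆ y, |deriv l y| with hL1
  set Hη := ⨆ y, |η y| with hHη
  set Hη1 := ⨆ y, |deriv η y| with hHη1
  have hlc := hl.continuous
  have hηc := hη.continuous
  have hcdl : Continuous (deriv l) := hl.continuous_deriv le_rfl
  have hcdη : Continuous (deriv η) := hη.continuous_deriv le_rfl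
  have hpdl : Function.Periodic (deriv l) 1 := coho_per_deriv l hlp
  have hpdη : Function.Periodic (deriv η) 1 := coho_per_deriv η hηp
  have hlam0 : (0:ℝ) ≤ lam := le_trans (abs_nonneg (l 0)) (coho_le_iSup l hlc hlp 0)
  have hS0 : (0:ℝ) ≤ S := le_trans zero_le_one hS
  have hL10 : (0:ℝ) ≤ L1 := le_trans (abs_nonneg _) (coho_le_iSup _ hcdl hpdl 0)
  have hHη0 : (0:ℝ) ≤ Hη := le_trans (abs_nonneg _) (coho_le_iSup _ hηc hηp 0)
  have hHη10 : (0:ℝ) ≤ Hη1 := le_trans (abs_nonneg _) (coho_le_iSup _ hcdη hpdη 0)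
  have hDb : ∀ (m : ℕ) (y : ℝ), |cohoD a m y| ≤ S ^ m :=
    fun m y => cohoD_bound l η a hl hη ha hlp hηp hap m y
  have hlb : ∀ y, |l y| ≤ lam := fun y => coho_le_iSup l hlc hlp y
  -- bound on each summand
  have hterm : ∀ j ∈ Finset.range n,
      |(∏ k ∈ (Finset.range n).erase j, l (a^[k] x)) * (deriv l (a^[j] x) * cohoD a j x)|
        ≤ L1 * (lam * S) ^ (n - 1) := by
    intro j hj
    have hcard : ((Finset.range n).erase j).card = n - 1 := by
      rw [Finset.card_erase_of_mem hj, Finset.card_range]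
    have h1 : |∏ k ∈ (Finset.range n).erase j, l (a^[k] x)| ≤ lam ^ (n - 1) := by
      rw [Finset.abs_prod]
      calc ∏ k ∈ (Finset.range n).erase j, |l (a^[k] x)|
          ≤ ∏ _k ∈ (Finset.range n).erase j, lam :=
            Finset.prod_le_prod (fun k _ => abs_nonneg _) (fun k _ => hlb _)
        _ = lam ^ (n - 1) := by rw [Finset.prod_const, hcard]
    have h2 : |deriv l (a^[j] x)| ≤ L1 := coho_le_iSup _ hcdl hpdl _
    have h3 : |cohoD a j x| ≤ S ^ (n - 1) := by
      refine (hDb j x).trans (pow_le_pow_right₀ hS ?_)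
      exact Nat.le_sub_one_of_lt (Finset.mem_range.mp hj)
    calc |(∏ k ∈ (Finset.range n).erase j, l (a^[k] x)) * (deriv l (a^[j] x) * cohoD a j x)|
        = |∏ k ∈ (Finset.range n).erase j, l (a^[k] x)| * (|deriv l (a^[j] x)| * |cohoD a j x|)
          := by rw [abs_mul, abs_mul]
      _ ≤ lam ^ (n - 1) * (L1 * S ^ (n - 1)) := by
          refine mul_le_mul h1 (mul_le_mul h2 h3 (abs_nonneg _) hL10) ?_ (pow_nonneg hlam0 _)
          positivity
      _ = L1 * (lam * S) ^ (n - 1) := by rw [mul_pow]; ring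
  have hsum : |∑ j ∈ Finset.range n,
      (∏ k ∈ (Finset.range n).erase j, l (a^[k] x)) * (deriv l (a^[j] x) * cohoD a j x)|
        ≤ (n : ℝ) * (L1 * (lam * S) ^ (n - 1)) := by
    calc |∑ j ∈ Finset.range n, _| ≤ ∑ j ∈ Finset.range n, |(∏ k ∈ (Finset.range n).erase j,
            l (a^[k] x)) * (deriv l (a^[j] x) * cohoD a j x)| := Finset.abs_sum_le_sum_abs _ _
      _ ≤ ∑ _j ∈ Finset.range n, L1 * (lam * S) ^ (n - 1) :=
          Finset.sum_le_sum hterm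
      _ = (n : ℝ) * (L1 * (lam * S) ^ (n - 1)) := by
          rw [Finset.sum_const, Finset.card_range, nsmul_eq_mul]
  have hP : |∏ k ∈ Finset.range n, l (a^[k] x)| ≤ lam ^ n := by
    rw [Finset.abs_prod]
    calc ∏ k ∈ Finset.range n, |l (a^[k] x)|
        ≤ ∏ _k ∈ Finset.range n, lam :=
          Finset.prod_le_prod (fun k _ => abs_nonneg _) (fun k _ => hlb _)
      _ = lam ^ n := by simp
  have hterm2 : |(∏ k ∈ Finset.range n, l (a^[k] x)) * (deriv η (a^[n] x) * cohoD a n x)|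
      ≤ Hη1 * (lam * S) ^ n := by
    calc |(∏ k ∈ Finset.range n, l (a^[k] x)) * (deriv η (a^[n] x) * cohoD a n x)|
        = |∏ k ∈ Finset.range n, l (a^[k] x)| * (|deriv η (a^[n] x)| * |cohoD a n x|) := by
          rw [abs_mul, abs_mul]
      _ ≤ lam ^ n * (Hη1 * S ^ n) := by
          refine mul_le_mul hP (mul_le_mul (coho_le_iSup _ hcdη hpdη _) (hDb n x)
            (abs_nonneg _) hHη10) ?_ (pow_nonneg hlam0 _)
          positivity
      _ = Hη1 * (lam * S) ^ n := by rw [mul_pow]; ring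
  have hη2 : |η (a^[n] x)| ≤ Hη := coho_le_iSup _ hηc hηp _
  calc |cohoC' l η a n x|
      ≤ |(∑ j ∈ Finset.range n, (∏ k ∈ (Finset.range n).erase j, l (a^[k] x)) *
          (deriv l (a^[j] x) * cohoD a j x)) * η (a^[n] x)| +
        |(∏ k ∈ Finset.range n, l (a^[k] x)) * (deriv η (a^[n] x) * cohoD a n x)| :=
        abs_add_le _ _
    _ ≤ ((n : ℝ) * (L1 * (lam * S) ^ (n - 1))) * Hη + Hη1 * (lam * S) ^ n := by
        refine add_le_add ?_ hterm2
        rw [abs_mul]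
        refine mul_le_mul hsum hη2 (abs_nonneg _) ?_
        positivity
    _ = (L1 * Hη) * ((n : ℝ) * (lam * S) ^ (n - 1)) + Hη1 * (lam * S) ^ n := by ring

end C1b

lemma coho_u_summable {q : ℝ} (hq0 : 0 ≤ q) (hq : q < 1) (C D : ℝ) :
    Summable (fun n : ℕ => C * ((n : ℝ) * q ^ (n - 1)) + D * q ^ n) := by
  have hgeo : Summable (fun n : ℕ => q ^ n) := summable_geometric_of_lt_one hq0 hq
  have hpow : Summable (fun n : ℕ => (n : ℝ) ^ 1 * q ^ n) :=
    summable_pow_mul_geometric_of_norm_lt_one 1 (by rwa [Real.norm_eq_abs, abs_of_nonneg hq0])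
  have h1 : Summable (fun n : ℕ => (n : ℝ) * q ^ (n - 1)) := by
    rw [← summable_nat_add_iff 1]
    have he : (fun n : ℕ => ((n + 1 : ℕ) : ℝ) * q ^ (n + 1 - 1)) =
        fun n : ℕ => (n : ℝ) ^ 1 * q ^ n + q ^ n := by
      funext n
      simp [Nat.add_sub_cancel]
      push_cast
      ring
    rw [he]
    exact hpow.add hgeo
  exact (h1.mul_left C).add (hgeo.mul_left D)

lemma coho_reg1 (l η a : ℝ → ℝ) (hl : ContDiff ℝ 1 l) (hη : ContDiff ℝ 1 η)
    (ha : ContDiff ℝ 1 a)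
    (hlp : Function.Periodic l 1) (hηp : Function.Periodic η 1)
    (hap : ∀ x, a (x + 1) = a x + 1)
    (hS : 1 ≤ ⨆ y, |deriv a y|)
    (hq : (⨆ y, |l y|) * (⨆ y, |deriv a y|) < 1)
    (φ : ℝ → ℝ) (hφ : CohoSol l η a φ) :
    Differentiable ℝ φ ∧
      CohoSol (fun x => l x * deriv a x) (fun x => deriv η x + deriv l x * φ (a x)) a
        (deriv φ) := by
  have hlc := hl.continuous
  have hηc := hη.continuous
  have hac := ha.continuous
  set lam := ⨆ y, |l y| with hlam
  set S := ⨆ y, |deriv a y| with hSdef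
  have hlam0 : (0:ℝ) ≤ lam := le_trans (abs_nonneg (l 0)) (coho_le_iSup l hlc hlp 0)
  have hS0 : (0:ℝ) ≤ S := le_trans zero_le_one hS
  have hq0 : (0:ℝ) ≤ lam * S := mul_nonneg hlam0 hS0
  have hsm : lam < 1 := lt_of_le_of_lt (le_mul_of_one_le_right hlam0 hS) hq
  -- the solution is the canonical series
  have hφeq : φ = cohoPhi l η a :=
    coho_uniq l η a hlc hηc hac hlp hηp hap hsm φ _ hφ
      (cohoPhi_sol l η a hlc hηc hac hlp hηp hap hsm)
  -- summable bound for the derivative series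
  set L1 := ⨆ y, |deriv l y| with hL1
  set Hη := ⨆ y, |η y| with hHη
  set Hη1 := ⨆ y, |deriv η y| with hHη1
  set u : ℕ → ℝ := fun n => (L1 * Hη) * ((n : ℝ) * (lam * S) ^ (n - 1)) + Hη1 * (lam * S) ^ n
    with hu
  have hub : ∀ (n : ℕ) (x : ℝ), ‖cohoC' l η a n x‖ ≤ u n := by
    intro n x
    rw [Real.norm_eq_abs]
    exact cohoC'_bound l η a hl hη ha hlp hηp hap hS n x
  have husum : Summable u := coho_u_summable hq0 hq _ _
  have hder : ∀ x, HasDerivAt (cohoPhi l η a) (∑' n, cohoC' l η a n x) x := by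
    intro x
    exact hasDerivAt_tsum husum (fun n y => cohoC_hasDeriv l η a hl hη ha n y) hub
      (cohoC_summable l η a hlc hηc hac hlp hηp hap hsm 0) x
  have hdiff : Differentiable ℝ φ := by
    rw [hφeq]; exact fun x => (hder x).differentiableAt
  have hderiv_eq : deriv φ = fun x => ∑' n, cohoC' l η a n x := by
    rw [hφeq]; funext x; exact (hder x).deriv
  refine ⟨hdiff, ?_, ?_, ?_, ?_⟩
  -- continuity of the derivative
  · rw [hderiv_eq]
    refine continuous_tsum ?_ husum hub
    intro n
    have hit : ∀ k : ℕ, Continuous (a^[k]) := fun k => hac.iterate k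
    have hcdl : Continuous (deriv l) := hl.continuous_deriv le_rfl
    have hcdη : Continuous (deriv η) := hη.continuous_deriv le_rfl
    have hcda : Continuous (deriv a) := ha.continuous_deriv le_rfl
    have hD : ∀ m : ℕ, Continuous (cohoD a m) :=
      fun m => continuous_finset_prod _ fun k _ => hcda.comp (hit k)
    exact ((continuous_finset_sum _ fun j _ =>
        (continuous_finset_prod _ fun k _ => hlc.comp (hit k)).mul
          ((hcdl.comp (hit j)).mul (hD j))).mul (hηc.comp (hit n))).add
      ((continuous_finset_prod _ fun k _ => hlc.comp (hit k)).mul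
        ((hcdη.comp (hit n)).mul (hD n)))
  -- boundedness of the derivative
  · refine ⟨∑' n, u n, ?_⟩
    intro x
    rw [hderiv_eq]
    have hsum' : Summable fun n => cohoC' l η a n x :=
      Summable.of_norm_bounded husum (fun n => hub n x)
    have e1 : |∑' n, cohoC' l η a n x| ≤ ∑' n, |cohoC' l η a n x| := by
      simpa [Real.norm_eq_abs] using norm_tsum_le_tsum_norm
        (f := fun n => cohoC' l η a n x) (by simpa [Real.norm_eq_abs] using hsum'.abs)
    refine e1.trans (Summable.tsum_le_tsum (fun n => hub n x) hsum'.abs husum)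
  -- periodicity of the derivative
  · exact coho_per_deriv φ hφ.2.2.1
  -- the derived equation
  · intro x
    have hφd : ∀ y, HasDerivAt φ (deriv φ y) y := fun y => (hdiff y).hasDerivAt
    have hrhs : HasDerivAt (fun y => l y * φ (a y) + η y)
        (deriv l x * φ (a x) + l x * (deriv φ (a x) * deriv a x) + deriv η x) x := by
      have h1 : HasDerivAt (fun y => φ (a y)) (deriv φ (a x) * deriv a x) x :=
        (hφd (a x)).comp x ((ha.differentiable one_ne_zero x).hasDerivAt)
      exact (((hl.differentiable one_ne_zero x).hasDerivAt.mul h1)).add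
        ((hη.differentiable one_ne_zero x).hasDerivAt
      )
    have hfun : φ = fun y => l y * φ (a y) + η y := funext hφ.2.2.2
    have : deriv φ x = deriv l x * φ (a x) + l x * (deriv φ (a x) * deriv a x) + deriv η x := by
      conv_lhs => rw [hfun]
      exact hrhs.deriv
    rw [this]
    ring

lemma coho_S_ge_one (a : ℝ → ℝ) (ha : ContDiff ℝ 1 a) (hap : ∀ x, a (x + 1) = a x + 1) :
    1 ≤ ⨆ y, |deriv a y| := by
  have hac := ha.continuous
  obtain ⟨c, _, hc⟩ := exists_deriv_eq_slope a one_pos hac.continuousOn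
    ((ha.differentiable one_ne_zero).differentiableOn)
  have h1 : a 1 = a 0 + 1 := by simpa using hap 0
  have h2 : deriv a c = 1 := by rw [hc, h1]; ring
  have hb : BddAbove (Set.range fun y => |deriv a y|) :=
    coho_bdd (deriv a) (ha.continuous_deriv le_rfl) (coho_deriv_lift_per a hap)
  calc (1:ℝ) = |deriv a c| := by rw [h2]; norm_num
    _ ≤ ⨆ y, |deriv a y| := le_ciSup hb c

theorem coho_main (r : ℕ) : ∀ l η a : ℝ → ℝ, ContDiff ℝ r l → ContDiff ℝ r η →
    ContDiff ℝ r a → Function.Periodic l 1 → Function.Periodic η 1 →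
    (∀ x, a (x + 1) = a x + 1) →
    (⨆ x : ℝ, |l x|) * (⨆ x : ℝ, |deriv a x|) ^ r < 1 →
    (∃! φ : ℝ → ℝ, CohoSol l η a φ) ∧ ∀ φ : ℝ → ℝ, CohoSol l η a φ → ContDiff ℝ r φ := by
  induction r with
  | zero =>
    intro l η a hl hη ha hlp hηp hap hsmall
    rw [pow_zero, mul_one] at hsmall
    have hlc := hl.continuous
    have hηc := hη.continuous
    have hac := ha.continuous
    constructor
    · exact ⟨cohoPhi l η a, cohoPhi_sol l η a hlc hηc hac hlp hηp hap hsmall,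
        fun ψ hψ => coho_uniq l η a hlc hηc hac hlp hηp hap hsmall ψ _ hψ
          (cohoPhi_sol l η a hlc hηc hac hlp hηp hap hsmall)⟩
    · intro φ hφ
      have : ContDiff ℝ 0 φ := contDiff_zero.mpr hφ.1
      exact_mod_cast this
  | succ r ih =>
    intro l η a hl hη ha hlp hηp hap hsmall
    have hcast1 : ((1:ℕ) : WithTop ℕ∞) ≤ ((r + 1 : ℕ) : WithTop ℕ∞) := by
      exact_mod_cast Nat.succ_le_succ (Nat.zero_le r)
    have hcastr : ((r:ℕ) : WithTop ℕ∞) ≤ ((r + 1 : ℕ) : WithTop ℕ∞) := by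
      exact_mod_cast Nat.le_succ r
    have hl1 : ContDiff ℝ 1 l := hl.of_le (by exact_mod_cast hcast1)
    have hη1 : ContDiff ℝ 1 η := hη.of_le (by exact_mod_cast hcast1)
    have ha1 : ContDiff ℝ 1 a := ha.of_le (by exact_mod_cast hcast1)
    have hlc := hl1.continuous
    set lam := ⨆ x : ℝ, |l x| with hlamdef
    set S := ⨆ x : ℝ, |deriv a x| with hSdef
    have hS : 1 ≤ S := coho_S_ge_one a ha1 hap
    have hS0 : (0:ℝ) ≤ S := le_trans zero_le_one hS
    have hlam0 : (0:ℝ) ≤ lam := le_trans (abs_nonneg (l 0)) (coho_le_iSup l hlc hlp 0)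
    have hsmall_r : lam * S ^ r < 1 :=
      lt_of_le_of_lt (mul_le_mul_of_nonneg_left (pow_le_pow_right₀ hS (Nat.le_succ r)) hlam0)
        hsmall
    have hq : lam * S < 1 := by
      have h1 : S ≤ S ^ (r + 1) := by
        calc S = S ^ 1 := (pow_one S).symm
          _ ≤ S ^ (r + 1) := pow_le_pow_right₀ hS (Nat.succ_le_succ (Nat.zero_le r))
      exact lt_of_le_of_lt (mul_le_mul_of_nonneg_left h1 hlam0) hsmall
    obtain ⟨hex, hreg⟩ := ih l η a (hl.of_le hcastr) (hη.of_le hcastr) (ha.of_le hcastr)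
      hlp hηp hap hsmall_r
    refine ⟨hex, ?_⟩
    intro φ hφ
    have hφr : ContDiff ℝ r φ := hreg φ hφ
    obtain ⟨hdiff, hsol'⟩ := coho_reg1 l η a hl1 hη1 ha1 hlp hηp hap hS hq φ hφ
    -- derived data
    have hacast : ContDiff ℝ ((r : ℕ∞) + 1) a := by exact_mod_cast ha
    have hlcast : ContDiff ℝ ((r : ℕ∞) + 1) l := by exact_mod_cast hl
    have hηcast : ContDiff ℝ ((r : ℕ∞) + 1) η := by exact_mod_cast hη
    have hda : ContDiff ℝ r (deriv a) := (contDiff_succ_iff_deriv.mp hacast).2.2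
    have hdl : ContDiff ℝ r (deriv l) := (contDiff_succ_iff_deriv.mp hlcast).2.2
    have hdη : ContDiff ℝ r (deriv η) := (contDiff_succ_iff_deriv.mp hηcast).2.2
    have hl₁ : ContDiff ℝ r (fun x => l x * deriv a x) := (hl.of_le hcastr).mul hda
    have hη₁ : ContDiff ℝ r (fun x => deriv η x + deriv l x * φ (a x)) :=
      hdη.add (hdl.mul (hφr.comp (ha.of_le hcastr)))
    have hl₁p : Function.Periodic (fun x => l x * deriv a x) 1 := by
      intro x
      simp only [hlp x, coho_deriv_lift_per a hap x]
    have hη₁p : Function.Periodic (fun x => deriv η x + deriv l x * φ (a x)) 1 := by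
      intro x
      simp only [coho_per_deriv η hηp x, coho_per_deriv l hlp x, hap x, hφ.2.2.1 (a x)]
    have hsmall₁ : (⨆ x : ℝ, |l x * deriv a x|) * S ^ r < 1 := by
      have hcda : Continuous (deriv a) := ha1.continuous_deriv le_rfl
      have hpda : Function.Periodic (deriv a) 1 := coho_deriv_lift_per a hap
      have hb1 : ∀ x, |l x * deriv a x| ≤ lam * S := by
        intro x
        rw [abs_mul]
        exact mul_le_mul (coho_le_iSup l hlc hlp x) (coho_le_iSup _ hcda hpda x)
          (abs_nonneg _) hlam0
      have h2 : (⨆ x : ℝ, |l x * deriv a x|) ≤ lam * S := ciSup_le hb1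
      calc (⨆ x : ℝ, |l x * deriv a x|) * S ^ r ≤ (lam * S) * S ^ r :=
            mul_le_mul_of_nonneg_right h2 (pow_nonneg hS0 r)
        _ = lam * S ^ (r + 1) := by rw [pow_succ]; ring
        _ < 1 := hsmall
    obtain ⟨-, hreg₁⟩ := ih (fun x => l x * deriv a x) (fun x => deriv η x + deriv l x * φ (a x))
      a hl₁ hη₁ (ha.of_le hcastr) hl₁p hη₁p hap hsmall₁
    have hdφ : ContDiff ℝ r (deriv φ) := hreg₁ (deriv φ) hsol'
    have : ContDiff ℝ ((r : ℕ∞) + 1) φ :=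
      contDiff_succ_iff_deriv.mpr ⟨hdiff, by simp, by exact_mod_cast hdφ⟩
    exact_mod_cast this

/-- for 1-periodic `C^r` functions `l, η` and a `C^r` lift `a` of a
degree-one circle map, if `‖l‖_{C⁰}·(‖a'‖_{C⁰})^r < 1` then the cohomological
equation `φ(x) = l(x)·φ(a(x)) + η(x)` has a unique bounded continuous 1-periodic
solution, and this solution is of class `C^r`. -/
theorem coho_Cr_regularity (r : ℕ) (l η a : ℝ → ℝ)
    (hl : ContDiff ℝ r l) (hη : ContDiff ℝ r η) (ha : ContDiff ℝ r a)
    (hlp : Function.Periodic l 1) (hηp : Function.Periodic η 1)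
    (hap : ∀ x, a (x + 1) = a x + 1)
    (hsmall : (⨆ x : ℝ, |l x|) * (⨆ x : ℝ, |deriv a x|) ^ r < 1) :
    (∃! φ : ℝ → ℝ, Continuous φ ∧ (∃ M : ℝ, ∀ x, |φ x| ≤ M) ∧ Function.Periodic φ 1 ∧
        ∀ x, φ x = l x * φ (a x) + η x) ∧
    ∀ φ : ℝ → ℝ, (Continuous φ ∧ (∃ M : ℝ, ∀ x, |φ x| ≤ M) ∧ Function.Periodic φ 1 ∧
        ∀ x, φ x = l x * φ (a x) + η x) → ContDiff ℝ r φ :=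
  coho_main r l η a hl hη ha hlp hηp hap hsmall
end

section
/- Let w : ℝ → ℝ be infinitely differentiable, and for j ∈ ℕ define the Taylor coefficients W_j = w^{(j)}(0)/j!, S_j = (sin∘w)^{(j)}(0)/j!, and C_j = (cos∘w)^{(j)}(0)/j!, where u^{(j)} denotes the j-th derivative. Then S_0 = sin(W_0), C_0 = cos(W_0), and for every j ≥ 1: S_j = (1/j)·Σ_{k=0}^{j−1} (j−k)·W_{j−k}·C_k and C_j = −(1/j)·Σ_{k=0}^{j−1} (j−k)·W_{j−k}·S_k. -/
lemma contDiff_iteratedDeriv (f : ℝ → ℝ) (hf : ContDiff ℝ (⊤:ℕ∞) f) (k : ℕ) :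
    ContDiff ℝ (⊤:ℕ∞) (iteratedDeriv k f) := by
  rw [iteratedDeriv_eq_iterate]; exact hf.iterate_deriv k

lemma leibniz_iteratedDeriv (f g : ℝ → ℝ) (hf : ContDiff ℝ (⊤:ℕ∞) f)
    (hg : ContDiff ℝ (⊤:ℕ∞) g) (n : ℕ) (x : ℝ) :
    iteratedDeriv n (fun y => f y * g y) x =
      ∑ k ∈ Finset.range (n+1),
        (n.choose k : ℝ) * iteratedDeriv k f x * iteratedDeriv (n-k) g x := by
  induction n generalizing x with
  | zero => simp
  | succ n ih =>
    have hfk : ∀ k y, DifferentiableAt ℝ (iteratedDeriv k f) y := fun k y =>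
      ((contDiff_iteratedDeriv f hf k).differentiable (by simp)).differentiableAt
    have hgk : ∀ k y, DifferentiableAt ℝ (iteratedDeriv k g) y := fun k y =>
      ((contDiff_iteratedDeriv g hg k).differentiable (by simp)).differentiableAt
    rw [iteratedDeriv_succ]
    have hfun : iteratedDeriv n (fun y => f y * g y) = fun y =>
        ∑ k ∈ Finset.range (n+1),
          (n.choose k : ℝ) * iteratedDeriv k f y * iteratedDeriv (n-k) g y :=
      funext fun y => ih y
    rw [hfun]
    rw [deriv_fun_sum (fun k _ => by
      exact (((hfk k x).const_mul _).mul (hgk (n-k) x)))]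
    have hterm : ∀ k ∈ Finset.range (n+1),
        deriv (fun y => (n.choose k : ℝ) * iteratedDeriv k f y * iteratedDeriv (n-k) g y) x
        = (n.choose k : ℝ) * (iteratedDeriv (k+1) f x * iteratedDeriv (n-k) g x)
            + (n.choose k : ℝ) * (iteratedDeriv k f x * iteratedDeriv (n-k+1) g x) := by
      intro k hk
      rw [deriv_fun_mul ((hfk k x).const_mul _) (hgk (n-k) x), deriv_const_mul _ (hfk k x)]
      rw [← iteratedDeriv_succ, ← iteratedDeriv_succ]
      ring
    rw [Finset.sum_congr rfl hterm]
    -- now the Pascal recombination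
    have key : ∀ k ∈ Finset.range (n+1), n + 1 - k = (n - k) + 1 := fun k hk =>
      Nat.succ_sub (Nat.lt_succ_iff.mp (Finset.mem_range.mp hk))
    rw [Finset.sum_add_distrib]
    -- S2 : second sum equals ∑_{k≤n} C(n,k) f^(k) g^(n+1-k)
    have hS2 : ∑ k ∈ Finset.range (n+1),
        (n.choose k : ℝ) * (iteratedDeriv k f x * iteratedDeriv (n-k+1) g x)
        = ∑ k ∈ Finset.range (n+1),
        (n.choose k : ℝ) * iteratedDeriv k f x * iteratedDeriv (n+1-k) g x := by
      refine Finset.sum_congr rfl fun k hk => by rw [key k hk]; ring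
    rw [hS2]
    -- RHS: split off k=0 via sum_range_succ'
    rw [Finset.sum_range_succ' (fun k => (((n+1).choose k : ℝ)) * iteratedDeriv k f x
        * iteratedDeriv (n+1-k) g x)]
    have hchoose : ∀ k, (((n+1).choose (k+1) : ℕ) : ℝ) = (n.choose k : ℝ) + (n.choose (k+1) : ℝ) := by
      intro k; rw [Nat.choose_succ_succ]; push_cast; ring
    have hsplit : ∑ k ∈ Finset.range (n+1),
        (((n+1).choose (k+1) : ℕ) : ℝ) * iteratedDeriv (k+1) f x * iteratedDeriv (n+1-(k+1)) g x
        = (∑ k ∈ Finset.range (n+1),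
            (n.choose k : ℝ) * (iteratedDeriv (k+1) f x * iteratedDeriv (n-k) g x))
          + ∑ k ∈ Finset.range (n+1),
            (n.choose (k+1) : ℝ) * iteratedDeriv (k+1) f x * iteratedDeriv (n-k) g x := by
      rw [← Finset.sum_add_distrib]
      refine Finset.sum_congr rfl fun k hk => ?_
      have : n + 1 - (k+1) = n - k := by omega
      rw [this, hchoose]; ring
    rw [hsplit]
    have hext : ∑ k ∈ Finset.range (n+1),
        (n.choose k : ℝ) * iteratedDeriv k f x * iteratedDeriv (n+1-k) g x
        = ∑ k ∈ Finset.range (n+2),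
        (n.choose k : ℝ) * iteratedDeriv k f x * iteratedDeriv (n+1-k) g x := by
      rw [Finset.sum_range_succ (fun k => (n.choose k : ℝ) * iteratedDeriv k f x
          * iteratedDeriv (n+1-k) g x) (n+1)]
      simp [Nat.choose_succ_self]
    have hlast : (∑ k ∈ Finset.range (n+1),
          (n.choose (k+1) : ℝ) * iteratedDeriv (k+1) f x * iteratedDeriv (n-k) g x)
        + ((n+1).choose 0 : ℝ) * iteratedDeriv 0 f x * iteratedDeriv (n+1-0) g x
        = ∑ k ∈ Finset.range (n+1),
            (n.choose k : ℝ) * iteratedDeriv k f x * iteratedDeriv (n+1-k) g x := by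
      rw [hext, Finset.sum_range_succ' (fun k => (n.choose k : ℝ) * iteratedDeriv k f x
          * iteratedDeriv (n+1-k) g x) (n+1)]
      simp [Nat.succ_sub_succ]
    linarith [hlast]

lemma rec_general (w u v : ℝ → ℝ) (hv : ContDiff ℝ (⊤:ℕ∞) v)
    (hw : ContDiff ℝ (⊤:ℕ∞) w)
    (hd : deriv u = fun y => v y * deriv w y) (n : ℕ) :
    iteratedDeriv (n+1) u 0 / ((n+1).factorial : ℝ)
    = (1/((n+1:ℕ):ℝ)) * ∑ k ∈ Finset.range (n+1), ((n+1-k:ℕ):ℝ) *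
        (iteratedDeriv (n+1-k) w 0 / (((n+1-k).factorial : ℕ) : ℝ)) *
        (iteratedDeriv k v 0 / ((k.factorial : ℕ) : ℝ)) := by
  have hdw : ContDiff ℝ (⊤:ℕ∞) (deriv w) := by
    have := contDiff_iteratedDeriv w hw 1
    rwa [iteratedDeriv_one] at this
  rw [iteratedDeriv_succ', hd,
    leibniz_iteratedDeriv v (deriv w) hv hdw n 0, Finset.sum_div, Finset.mul_sum]
  refine Finset.sum_congr rfl fun k hk => ?_
  have hk' : k ≤ n := Nat.lt_succ_iff.mp (Finset.mem_range.mp hk)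
  have h1 : n + 1 - k = (n - k) + 1 := by omega
  have hid : iteratedDeriv (n-k) (deriv w) 0 = iteratedDeriv ((n-k)+1) w 0 := by
    rw [iteratedDeriv_succ']
  rw [hid, h1]
  obtain ⟨m, rfl⟩ : ∃ m, n = k + m := ⟨n - k, by omega⟩
  simp only [Nat.add_sub_cancel_left]
  have h2 : (((k+m).choose k : ℕ):ℝ) * (k.factorial : ℝ) * (m.factorial : ℝ)
      = ((k+m).factorial : ℝ) := by
    have := Nat.choose_mul_factorial_mul_factorial (Nat.le_add_right k m)
    rw [Nat.add_sub_cancel_left] at this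
    exact_mod_cast this
  have hne2 : (((k+m).factorial : ℕ):ℝ) ≠ 0 := Nat.cast_ne_zero.mpr (Nat.factorial_ne_zero _)
  have hne3 : ((m.factorial : ℕ):ℝ) ≠ 0 := Nat.cast_ne_zero.mpr (Nat.factorial_ne_zero _)
  have hne4 : ((k.factorial : ℕ):ℝ) ≠ 0 := Nat.cast_ne_zero.mpr (Nat.factorial_ne_zero k)
  have hne1 : ((k:ℝ)+(m:ℝ)+1) ≠ 0 := by positivity
  have hne5 : ((m:ℝ)+1) ≠ 0 := by positivity
  push_cast [Nat.factorial_succ]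
  field_simp
  linear_combination (iteratedDeriv k v 0 * iteratedDeriv (m+1) w 0) * h2

/-- recursion for the Taylor coefficients of `sin ∘ w` and `cos ∘ w`
at `0`: with `W_j = w^{(j)}(0)/j!`, `S_j = (sin∘w)^{(j)}(0)/j!`,
`C_j = (cos∘w)^{(j)}(0)/j!`, one has `S_0 = sin W_0`, `C_0 = cos W_0`, and for
`j ≥ 1`, `S_j = (1/j)·Σ_{k<j} (j−k)·W_{j−k}·C_k` and
`C_j = −(1/j)·Σ_{k<j} (j−k)·W_{j−k}·S_k`. -/
theorem sin_cos_taylor_recursion (w : ℝ → ℝ) (hw : ContDiff ℝ (⊤ : ℕ∞) w)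
    (W S C : ℕ → ℝ)
    (hW : ∀ j, W j = iteratedDeriv j w 0 / (j.factorial : ℝ))
    (hS : ∀ j, S j = iteratedDeriv j (fun s => Real.sin (w s)) 0 / (j.factorial : ℝ))
    (hC : ∀ j, C j = iteratedDeriv j (fun s => Real.cos (w s)) 0 / (j.factorial : ℝ)) :
    S 0 = Real.sin (W 0) ∧ C 0 = Real.cos (W 0) ∧
    ∀ j : ℕ, 1 ≤ j →
      S j = (1 / (j : ℝ)) * ∑ k ∈ Finset.range j, ((j - k : ℕ) : ℝ) * W (j - k) * C k ∧
      C j = -(1 / (j : ℝ)) * ∑ k ∈ Finset.range j, ((j - k : ℕ) : ℝ) * W (j - k) * S k := by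
  have hwdiff : ∀ y : ℝ, DifferentiableAt ℝ w y := fun y =>
    (hw.differentiable (by simp)).differentiableAt
  have hsin : ContDiff ℝ (⊤:ℕ∞) (fun s => Real.sin (w s)) := Real.contDiff_sin.comp hw
  have hcos : ContDiff ℝ (⊤:ℕ∞) (fun s => Real.cos (w s)) := Real.contDiff_cos.comp hw
  have hdsin : deriv (fun s => Real.sin (w s)) = fun y => Real.cos (w y) * deriv w y :=
    funext fun y => ((hwdiff y).hasDerivAt.sin).deriv
  have hdcos : deriv (fun s => Real.cos (w s)) = fun y => (-Real.sin (w y)) * deriv w y :=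
    funext fun y => ((hwdiff y).hasDerivAt.cos).deriv
  refine ⟨by simp [hS, hW, iteratedDeriv_zero], by simp [hC, hW, iteratedDeriv_zero], ?_⟩
  rintro (_|n) hj
  · omega
  constructor
  · rw [hS (n+1), rec_general w (fun s => Real.sin (w s)) (fun s => Real.cos (w s))
      hcos hw hdsin n]
    push_cast
    congr 1
    refine Finset.sum_congr rfl fun k hk => ?_
    rw [hW (n+1-k), hC k]
  · rw [hC (n+1), rec_general w (fun s => Real.cos (w s)) (fun s => -Real.sin (w s))
      hsin.neg hw hdcos n]
    have : ∀ k ∈ Finset.range (n+1), ((n+1-k:ℕ):ℝ) *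
        (iteratedDeriv (n+1-k) w 0 / (((n+1-k).factorial : ℕ) : ℝ)) *
        (iteratedDeriv k (fun s => -Real.sin (w s)) 0 / ((k.factorial : ℕ) : ℝ))
        = -(((n+1-k:ℕ):ℝ) * W (n+1-k) * S k) := by
      intro k hk
      rw [show (fun s => -Real.sin (w s)) = (fun s => -((fun t => Real.sin (w t)) s)) from rfl,
        iteratedDeriv_fun_neg, hW (n+1-k), hS k]
      ring
    rw [Finset.sum_congr rfl this, Finset.sum_neg_distrib]
    push_cast
    ring
end
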